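/- arXiv:2209.04121 — 3 statements merged into one kernel-verified Lean document; each statement's English description precedes it below -/
import Mathlib

section
/- For σ(t) = sin(t), the dual kernel satisfies K_sin(x,y) := E_{w∼N(0,I_d)}[sin(⟨w,x⟩)·sin(⟨w,y⟩)] = e^{-(‖x‖₂² + ‖y‖₂²)/2} · sinh(⟨x,y⟩) for all x, y ∈ ℝ^d. -/
open MeasureTheory ProbabilityTheory Real
open scoped RealInnerProductSpace

/-- The standard Gaussian measure `N(0, I_d)` on `ℝ^d`. -/
noncomputable def stdGaussianE (d : ℕ) : Measure (EuclideanSpace ℝ (Fin d)) :=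
  Measure.map (MeasurableEquiv.toLp 2 (Fin d → ℝ)) (Measure.pi fun _ => gaussianReal 0 1)

open scoped NNReal ENNReal

lemma gauss_cexp (a : ℝ) :
    ∫ t : ℝ, Complex.exp (a * t * Complex.I) ∂(gaussianReal 0 1) =
      Complex.exp (-(a : ℂ) ^ 2 / 2) := by
  rw [gaussianReal_of_var_ne_zero 0 one_ne_zero]
  rw [show gaussianPDF 0 1 = fun x => ((Real.toNNReal (gaussianPDFReal 0 1 x) : ℝ≥0) : ℝ≥0∞)
      from rfl]
  rw [integral_withDensity_eq_integral_smul
      ((measurable_gaussianPDFReal 0 1).real_toNNReal) _]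
  have h1 : ∀ t : ℝ, (Real.toNNReal (gaussianPDFReal 0 1 t) : ℝ≥0) • Complex.exp (a * t * Complex.I)
      = ((√(2 * π))⁻¹ : ℝ) • Complex.exp (-(1/2 : ℂ) * t ^ 2 + (a * Complex.I) * t + 0) := by
    intro t
    have hp : ((Real.toNNReal (gaussianPDFReal 0 1 t) : ℝ≥0) : ℝ) = gaussianPDFReal 0 1 t :=
      Real.coe_toNNReal _ (gaussianPDFReal_nonneg 0 1 t)
    have : ((Real.toNNReal (gaussianPDFReal 0 1 t) : ℝ≥0) • Complex.exp (a * t * Complex.I))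
        = (gaussianPDFReal 0 1 t : ℂ) * Complex.exp (a * t * Complex.I) := by
      rw [NNReal.smul_def, Complex.real_smul, hp]
    rw [this, Complex.real_smul]
    rw [gaussianPDFReal]
    push_cast
    rw [mul_assoc, ← Complex.exp_add]
    ring_nf
  simp_rw [h1]
  rw [integral_smul]
  rw [integral_cexp_quadratic (b := -(1/2 : ℂ)) (by norm_num) (a * Complex.I) 0]
  have h2 : ((π : ℂ) / -(-(1/2 : ℂ))) ^ (1/2 : ℂ) = ((√(2 * π) : ℝ) : ℂ) := by
    rw [Real.sqrt_eq_rpow, Complex.ofReal_cpow (by positivity)]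
    norm_num
    congr 1
    ring
  rw [h2]
  have h3 : (0 : ℂ) - (↑a * Complex.I) ^ 2 / (4 * -(1/2 : ℂ)) = -(a:ℂ)^2/2 := by
    rw [mul_pow, Complex.I_sq]
    ring
  rw [h3, Complex.real_smul, ← mul_assoc, ← Complex.ofReal_mul,
    inv_mul_cancel₀ (by positivity), Complex.ofReal_one, one_mul]

lemma pi_gauss_prod (d : ℕ) (f : Fin d → ℝ → ℂ) :
    ∫ x : Fin d → ℝ, ∏ i, f i (x i) ∂(Measure.pi fun _ => gaussianReal 0 1) =
      ∏ i, ∫ t, f i t ∂(gaussianReal 0 1) := by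
  letI : MeasureSpace ℝ := ⟨gaussianReal 0 1⟩
  haveI : SigmaFinite (volume : Measure ℝ) := by
    change SigmaFinite (gaussianReal 0 1); infer_instance
  have := MeasureTheory.integral_fintype_prod_eq_prod (ι := Fin d) (fun i => f i) (μ := fun _ => gaussianReal 0 1)
  exact this

lemma gauss_char (d : ℕ) (z : EuclideanSpace ℝ (Fin d)) :
    ∫ w, Complex.exp (⟪w, z⟫ * Complex.I) ∂(stdGaussianE d) =
      Complex.exp (-((‖z‖ : ℂ)) ^ 2 / 2) := by
  have h1 : ∀ w : EuclideanSpace ℝ (Fin d),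
      Complex.exp (⟪w, z⟫ * Complex.I) = ∏ i, Complex.exp ((z i : ℂ) * (w i) * Complex.I) := by
    intro w
    rw [← Complex.exp_sum]
    congr 1
    rw [PiLp.inner_apply]
    push_cast
    rw [Finset.sum_mul]
    congr 1 with i
    simp [RCLike.inner_apply]
  simp_rw [h1]
  rw [show (∫ w, ∏ i, Complex.exp ((z i : ℂ) * (w i) * Complex.I) ∂(stdGaussianE d)) =
      ∫ x : Fin d → ℝ, ∏ i, Complex.exp ((z i : ℂ) * (x i) * Complex.I)
        ∂(Measure.pi fun _ => gaussianReal 0 1) by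
      rw [stdGaussianE, integral_map_equiv]; rfl]
  rw [pi_gauss_prod d (fun i t => Complex.exp ((z i : ℂ) * t * Complex.I))]
  simp_rw [gauss_cexp]
  rw [← Complex.exp_sum]
  congr 1
  have : ‖z‖ ^ 2 = ∑ i, (z i) ^ 2 := by
    rw [EuclideanSpace.norm_eq]
    rw [Real.sq_sqrt (Finset.sum_nonneg fun i _ => sq_nonneg _)]
    simp [sq_abs]
  rw [show -((‖z‖ : ℂ))^2/2 = -((‖z‖^2 : ℝ) : ℂ)/2 by push_cast; ring, this]
  push_cast
  rw [← Finset.sum_div, ← Finset.sum_neg_distrib]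

instance (d : ℕ) : IsProbabilityMeasure (stdGaussianE d) :=
  Measure.isProbabilityMeasure_map (MeasurableEquiv.measurable _).aemeasurable

lemma gauss_cos (d : ℕ) (z : EuclideanSpace ℝ (Fin d)) :
    ∫ w, Real.cos ⟪w, z⟫ ∂(stdGaussianE d) = Real.exp (-‖z‖ ^ 2 / 2) := by
  have hcont : Continuous fun w : EuclideanSpace ℝ (Fin d) =>
      Complex.exp ((⟪w, z⟫ : ℝ) * Complex.I) := by
    exact Complex.continuous_exp.comp
      ((Complex.continuous_ofReal.comp (continuous_id.inner continuous_const)).mul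
        continuous_const)
  have hint : Integrable (fun w : EuclideanSpace ℝ (Fin d) =>
      Complex.exp ((⟪w, z⟫ : ℝ) * Complex.I)) (stdGaussianE d) := by
    refine Integrable.mono' (integrable_const 1) hcont.aestronglyMeasurable ?_
    filter_upwards with w
    rw [Complex.norm_exp_ofReal_mul_I]
  have h := gauss_char d z
  have hre : (∫ w, Complex.exp ((⟪w, z⟫ : ℝ) * Complex.I) ∂(stdGaussianE d)).re
      = ∫ w, Real.cos ⟪w, z⟫ ∂(stdGaussianE d) := by
    have h2 := integral_re hint
    simp only [RCLike.re_to_complex] at h2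
    rw [← h2]
    congr 1 with w
    rw [Complex.exp_ofReal_mul_I_re]
  rw [← hre, h, show -((‖z‖ : ℂ)) ^ 2 / 2 = ((-‖z‖ ^ 2 / 2 : ℝ) : ℂ) by push_cast; ring,
    Complex.exp_ofReal_re]

lemma int_cos (d : ℕ) (z : EuclideanSpace ℝ (Fin d)) :
    Integrable (fun w : EuclideanSpace ℝ (Fin d) => Real.cos ⟪w, z⟫) (stdGaussianE d) := by
  refine Integrable.mono' (integrable_const 1)
    ((Real.continuous_cos.comp (continuous_id.inner continuous_const)).aestronglyMeasurable) ?_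
  filter_upwards with w
  exact Real.abs_cos_le_one _

/-- The dual kernel of the sine activation:
`K_sin(x,y) = E_{w∼N(0,I_d)}[sin⟨w,x⟩ sin⟨w,y⟩] = e^{-(‖x‖²+‖y‖²)/2} sinh⟨x,y⟩`. -/
theorem dualKernel_sin (d : ℕ) (x y : EuclideanSpace ℝ (Fin d)) :
    ∫ w, Real.sin ⟪w, x⟫ * Real.sin ⟪w, y⟫ ∂(stdGaussianE d) =
      Real.exp (-(‖x‖ ^ 2 + ‖y‖ ^ 2) / 2) * Real.sinh ⟪x, y⟫ := by
  have h1 : ∀ w : EuclideanSpace ℝ (Fin d),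
      Real.sin ⟪w, x⟫ * Real.sin ⟪w, y⟫
        = (Real.cos ⟪w, x - y⟫ - Real.cos ⟪w, x + y⟫) / 2 := by
    intro w
    rw [inner_sub_right, inner_add_right, Real.cos_sub, Real.cos_add]
    ring
  simp_rw [h1]
  rw [integral_div, integral_sub (int_cos d (x - y)) (int_cos d (x + y)),
    gauss_cos d (x - y), gauss_cos d (x + y)]
  have hsub : ‖x - y‖ ^ 2 = ‖x‖ ^ 2 - 2 * ⟪x, y⟫ + ‖y‖ ^ 2 := norm_sub_sq_real x y
  have hadd : ‖x + y‖ ^ 2 = ‖x‖ ^ 2 + 2 * ⟪x, y⟫ + ‖y‖ ^ 2 := norm_add_sq_real x y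
  rw [hsub, hadd, Real.sinh_eq,
    show -(‖x‖ ^ 2 - 2 * ⟪x, y⟫ + ‖y‖ ^ 2) / 2 = -(‖x‖ ^ 2 + ‖y‖ ^ 2) / 2 + ⟪x, y⟫ by ring,
    show -(‖x‖ ^ 2 + 2 * ⟪x, y⟫ + ‖y‖ ^ 2) / 2 = -(‖x‖ ^ 2 + ‖y‖ ^ 2) / 2 + -⟪x, y⟫ by ring,
    Real.exp_add, Real.exp_add]
  ring
end

section
/- For σ(t) = exp(-At²) with A ≥ 0, the dual activation satisfies k_σ(a,b,c) = 1/√((2Aa²+1)(2Ab²+1) - (2Aabc)²) for all a,b ≥ 0 and c ∈ [-1,1]. -/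
open MeasureTheory ProbabilityTheory Real
open scoped ENNReal NNReal

lemma gauss_int (P Q R : ℝ) (hP : 0 ≤ P) :
    ∫ y, rexp (-(P * y ^ 2) + Q * y + R) ∂(gaussianReal 0 1)
      = rexp (R + Q ^ 2 / (4 * P + 2)) / Real.sqrt (2 * P + 1) := by
  have hp : (0:ℝ) < P + 1/2 := by linarith
  have hπ := Real.pi_pos
  rw [gaussianReal_of_var_ne_zero 0 one_ne_zero]
  rw [show (gaussianPDF 0 1) = fun y => ((Real.toNNReal (gaussianPDFReal 0 1 y) : ℝ≥0) : ℝ≥0∞)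
    from rfl]
  rw [integral_withDensity_eq_integral_smul
    ((measurable_gaussianPDFReal 0 1).real_toNNReal)]
  simp only [NNReal.smul_def]
  have hco : ∀ y : ℝ, ((Real.toNNReal (gaussianPDFReal 0 1 y) : ℝ≥0) : ℝ)
      = gaussianPDFReal 0 1 y :=
    fun y => Real.coe_toNNReal _ (gaussianPDFReal_nonneg _ _ _)
  simp_rw [hco]
  have key : ∀ y : ℝ, gaussianPDFReal 0 1 y * rexp (-(P * y ^ 2) + Q * y + R)
      = rexp (R + Q ^ 2 / (4 * P + 2)) *
        ((Real.sqrt (2 * π))⁻¹ * rexp (-(P + 1/2) * (y - Q / (2 * P + 1)) ^ 2)) := by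
    intro y
    rw [gaussianPDFReal]
    simp only [NNReal.coe_one, mul_one, sub_zero]
    rw [mul_assoc, ← Real.exp_add, mul_comm (rexp (R + Q ^ 2 / (4 * P + 2))), mul_assoc,
      ← Real.exp_add]
    congr 1
    have h1 : (2:ℝ) * P + 1 ≠ 0 := by linarith
    rw [Real.exp_eq_exp]
    field_simp
    ring
  simp_rw [smul_eq_mul, key]
  rw [integral_const_mul, integral_const_mul]
  have hshift := integral_sub_right_eq_self (μ := volume)
    (fun y => rexp (-(P + 1/2) * y ^ 2)) (Q / (2 * P + 1))
  rw [hshift, integral_gaussian]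
  have hfin : (Real.sqrt (2 * π))⁻¹ * Real.sqrt (π / (P + 1/2))
      = (Real.sqrt (2 * P + 1))⁻¹ := by
    rw [show 2 * π = (2 * P + 1) * (π / (P + 1/2)) by field_simp,
      Real.sqrt_mul (by linarith), mul_inv, mul_assoc,
      inv_mul_cancel₀ (ne_of_gt (Real.sqrt_pos.2 (by positivity))), mul_one]
  rw [hfin]; ring

/-- The centered bivariate Gaussian with covariance `Λ = [[a², abc],[abc, b²]]`,
realized as the pushforward of two i.i.d. standard Gaussians under whitening. -/
noncomputable def gaussian2 (a b c : ℝ) : Measure (ℝ × ℝ) :=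
  Measure.map (fun w => (a * w.1, b * c * w.1 + b * Real.sqrt (1 - c ^ 2) * w.2))
    ((gaussianReal 0 1).prod (gaussianReal 0 1))

/-- Dual activation of the Gaussian activation `σ(t) = exp(-At²)` with `A ≥ 0`:
`k_σ(a,b,c) = 1/√((2Aa²+1)(2Ab²+1) - (2Aabc)²)`. -/
theorem dualActivation_gaussian (A a b c : ℝ) (hA : 0 ≤ A) (ha : 0 ≤ a) (hb : 0 ≤ b)
    (hc : c ∈ Set.Icc (-1 : ℝ) 1) :
    ∫ p, Real.exp (-A * p.1 ^ 2) * Real.exp (-A * p.2 ^ 2) ∂(gaussian2 a b c) =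
      1 / Real.sqrt ((2 * A * a ^ 2 + 1) * (2 * A * b ^ 2 + 1) -
        (2 * A * a * b * c) ^ 2) := by
  obtain ⟨hc1, hc2⟩ := hc
  have hcc : (0:ℝ) ≤ 1 - c ^ 2 := by nlinarith
  have hs2 : Real.sqrt (1 - c ^ 2) ^ 2 = 1 - c ^ 2 := Real.sq_sqrt hcc
  set s := Real.sqrt (1 - c ^ 2) with hs
  have hkey : (0:ℝ) ≤ A * b ^ 2 * (1 - c ^ 2) := mul_nonneg (by positivity) hcc
  have hD : (0:ℝ) < 2 * A * b ^ 2 * (1 - c ^ 2) + 1 := by nlinarith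
  set D := 2 * A * b ^ 2 * (1 - c ^ 2) + 1 with hDdef
  rw [gaussian2]
  have hmap : Measurable fun w : ℝ × ℝ => (a * w.1, b * c * w.1 + b * s * w.2) := by
    fun_prop
  have hfc : Continuous fun p : ℝ × ℝ => rexp (-A * p.1 ^ 2) * rexp (-A * p.2 ^ 2) := by
    fun_prop
  rw [integral_map hmap.aemeasurable hfc.aestronglyMeasurable]
  simp only []
  have hint : Integrable
      (fun w : ℝ × ℝ => rexp (-A * (a * w.1) ^ 2) * rexp (-A * (b * c * w.1 + b * s * w.2) ^ 2))
      ((gaussianReal 0 1).prod (gaussianReal 0 1)) := by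
    refine (integrable_const (1:ℝ)).mono'
      (Continuous.aestronglyMeasurable (by fun_prop)) (ae_of_all _ fun w => ?_)
    rw [Real.norm_eq_abs, abs_mul, abs_of_pos (Real.exp_pos _), abs_of_pos (Real.exp_pos _)]
    have h1 : rexp (-A * (a * w.1) ^ 2) ≤ 1 := by
      rw [Real.exp_le_one_iff]; nlinarith [sq_nonneg (a * w.1)]
    have h2 : rexp (-A * (b * c * w.1 + b * s * w.2) ^ 2) ≤ 1 := by
      rw [Real.exp_le_one_iff]; nlinarith [sq_nonneg (b * c * w.1 + b * s * w.2)]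
    nlinarith [Real.exp_pos (-A * (a * w.1) ^ 2), Real.exp_pos (-A * (b * c * w.1 + b * s * w.2) ^ 2)]
  rw [integral_prod _ hint]
  have hinner : ∀ x : ℝ, ∫ y, rexp (-A * (b * c * x + b * s * y) ^ 2) ∂(gaussianReal 0 1)
      = rexp ((-(A * b ^ 2 * c ^ 2 * x ^ 2)) +
          (-(2 * A * b ^ 2 * c * s * x)) ^ 2 / (4 * (A * b ^ 2 * (1 - c ^ 2)) + 2)) /
        Real.sqrt (2 * (A * b ^ 2 * (1 - c ^ 2)) + 1) := by
    intro x
    have hexp : ∀ y : ℝ, -A * (b * c * x + b * s * y) ^ 2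
        = -(A * b ^ 2 * (1 - c ^ 2) * y ^ 2) + (-(2 * A * b ^ 2 * c * s * x)) * y +
          (-(A * b ^ 2 * c ^ 2 * x ^ 2)) := by
      intro y
      linear_combination (-(A * b ^ 2 * y ^ 2)) * hs2
    simp_rw [hexp]
    exact gauss_int _ _ _ hkey
  simp_rw [integral_const_mul, hinner]
  set P₂ := A * a ^ 2 + A * b ^ 2 * c ^ 2 / D with hP₂def
  have hP₂ : 0 ≤ P₂ := by
    rw [hP₂def]
    have : 0 ≤ A * b ^ 2 * c ^ 2 / D := by positivity
    nlinarith [mul_nonneg hA (sq_nonneg a)]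
  have houter : ∀ x : ℝ, rexp (-A * (a * x) ^ 2) *
      (rexp ((-(A * b ^ 2 * c ^ 2 * x ^ 2)) +
          (-(2 * A * b ^ 2 * c * s * x)) ^ 2 / (4 * (A * b ^ 2 * (1 - c ^ 2)) + 2)) /
        Real.sqrt (2 * (A * b ^ 2 * (1 - c ^ 2)) + 1))
      = (Real.sqrt D)⁻¹ * rexp (-(P₂ * x ^ 2) + 0 * x + 0) := by
    intro x
    have hq : (-(2 * A * b ^ 2 * c * s * x)) ^ 2 = 4 * A^2 * b^4 * c^2 * (1 - c^2) * x^2 := by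
      linear_combination (4 * A^2 * b^4 * c^2 * x^2) * hs2
    rw [hq, div_eq_mul_inv, ← mul_assoc, ← Real.exp_add]
    have hsq : 2 * (A * b ^ 2 * (1 - c ^ 2)) + 1 = D := by rw [hDdef]; ring
    rw [hsq, mul_comm]
    congr 2
    have h2D : 4 * (A * b ^ 2 * (1 - c ^ 2)) + 2 = 2 * D := by rw [hDdef]; ring
    rw [h2D, hP₂def]
    field_simp
    ring
  simp_rw [houter]
  rw [integral_const_mul, gauss_int _ _ _ hP₂]
  have : (0:ℝ) + 0 ^ 2 / (4 * P₂ + 2) = 0 := by simp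
  rw [this, Real.exp_zero]
  have hDE : (2 * A * a ^ 2 + 1) * (2 * A * b ^ 2 + 1) - (2 * A * a * b * c) ^ 2
      = D * (2 * P₂ + 1) := by
    rw [hP₂def, hDdef]
    field_simp
    ring
  rw [hDE, Real.sqrt_mul hD.le]
  have h2P : (0:ℝ) < Real.sqrt (2 * P₂ + 1) := Real.sqrt_pos.2 (by linarith)
  have hsD : (0:ℝ) < Real.sqrt D := Real.sqrt_pos.2 hD
  field_simp
end

section
/- For the ReLU activation σ(t) = max(t,0), the dual activation equals k_σ(a,b,c) = (ab/(2π))·(√(1-c²) + (π - arccos(c))·c) for all a, b ≥ 0 and c ∈ [-1,1]. -/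
open MeasureTheory ProbabilityTheory Real
open scoped NNReal ENNReal

section aux
open Set Filter intervalIntegral

private lemma radial_integral' : ∫ r in Ioi (0:ℝ), r ^ 3 * Real.exp (-r ^ 2 / 2) = 2 := by
  have hderiv : ∀ r ∈ Ici (0:ℝ), HasDerivAt (fun r : ℝ => -((r ^ 2 + 2) * Real.exp (-r ^ 2 / 2)))
      (r ^ 3 * Real.exp (-r ^ 2 / 2)) r := by
    intro r _
    have h1 : HasDerivAt (fun r : ℝ => -r ^ 2 / 2) (-r) r := by
      have := (hasDerivAt_pow 2 r).neg.div_const 2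
      simpa using this.congr_deriv (by ring)
    have h2 : HasDerivAt (fun r : ℝ => Real.exp (-r ^ 2 / 2)) (Real.exp (-r ^ 2 / 2) * (-r)) r :=
      (Real.hasDerivAt_exp _).comp r h1
    have h3 : HasDerivAt (fun r : ℝ => r ^ 2 + 2) (2 * r) r := by
      simpa using (hasDerivAt_pow 2 r).add_const 2
    have := (h3.mul h2).neg
    refine this.congr_deriv ?_
    ring
  have hint : IntegrableOn (fun r : ℝ => r ^ 3 * Real.exp (-r ^ 2 / 2)) (Ioi 0) := by
    have := integrableOn_rpow_mul_exp_neg_mul_sq (b := 1/2) (by norm_num) (s := 3) (by norm_num)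
    refine this.congr_fun (fun x hx => ?_) measurableSet_Ioi
    dsimp only
    rw [show (3:ℝ) = ((3:ℕ):ℝ) by norm_num, Real.rpow_natCast]
    ring_nf
  have htend : Tendsto (fun r : ℝ => -((r ^ 2 + 2) * Real.exp (-r ^ 2 / 2))) atTop (nhds 0) := by
    have h0 : Tendsto (fun x : ℝ => x * Real.exp (-x)) atTop (nhds 0) := by
      simpa using Real.tendsto_pow_mul_exp_neg_atTop_nhds_zero 1
    have h1 : Tendsto (fun x : ℝ => Real.exp (-x)) atTop (nhds 0) :=
      Real.tendsto_exp_neg_atTop_nhds_zero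
    have hsq : Tendsto (fun r : ℝ => r ^ 2 / 2) atTop atTop :=
      (tendsto_pow_atTop (by norm_num)).atTop_div_const (by norm_num)
    have := ((h0.comp hsq).const_mul 2).add ((h1.comp hsq).const_mul 2)
    have h2 : Tendsto (fun r : ℝ => (r ^ 2 + 2) * Real.exp (-r ^ 2 / 2)) atTop (nhds 0) := by
      convert this using 2 with r
      · simp only [Function.comp]
        rw [neg_div]
        ring
      · norm_num
    simpa using h2.neg
  rw [integral_Ioi_of_hasDerivAt_of_tendsto' hderiv hint htend]
  norm_num

private lemma cos_prod_antideriv' (α θ : ℝ) :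
    HasDerivAt (fun θ : ℝ => Real.sin (2 * θ - α) / 4 + θ * (Real.cos α / 2))
      (Real.cos θ * Real.cos (θ - α)) θ := by
  have h1 : HasDerivAt (fun θ : ℝ => 2 * θ - α) 2 θ := by
    simpa using ((hasDerivAt_id θ).const_mul 2).sub_const α
  have h2 : HasDerivAt (fun θ : ℝ => Real.sin (2 * θ - α)) (Real.cos (2 * θ - α) * 2) θ :=
    (Real.hasDerivAt_sin _).comp θ h1
  have h3 := (h2.div_const 4).add ((hasDerivAt_id θ).mul_const (Real.cos α / 2))
  refine h3.congr_deriv ?_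
  have e1 : 2 * θ - α = θ + (θ - α) := by ring
  have e2 : α = θ - (θ - α) := by ring
  have key : Real.cos α = Real.cos θ * Real.cos (θ - α) + Real.sin θ * Real.sin (θ - α) := by
    conv_lhs => rw [e2, Real.cos_sub]
  rw [e1, Real.cos_add, key]
  ring

private lemma angular_integral' {α : ℝ} (h0 : 0 ≤ α) (hπ : α ≤ π) :
    ∫ θ in Ioo (-π) π, max (Real.cos θ) 0 * max (Real.cos (θ - α)) 0 =
      (Real.sin α + (π - α) * Real.cos α) / 2 := by
  have hπ0 := Real.pi_pos
  set f : ℝ → ℝ := fun θ => max (Real.cos θ) 0 * max (Real.cos (θ - α)) 0 with hf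
  have hfc : Continuous f :=
    (Real.continuous_cos.max continuous_const).mul
      ((Real.continuous_cos.comp (continuous_id.sub continuous_const)).max continuous_const)
  have h1 : -π ≤ α - π/2 := by linarith
  have h2 : α - π/2 ≤ π/2 := by linarith
  have h3 : (π/2 : ℝ) ≤ π := by linarith
  have hIoo : ∫ θ in Ioo (-π) π, f θ = ∫ θ in (-π)..π, f θ := by
    rw [intervalIntegral.integral_of_le (by linarith), integral_Ioc_eq_integral_Ioo]
  rw [hIoo]
  have hsplit1 : ∫ θ in (-π)..π, f θ =
      (∫ θ in (-π)..(α - π/2), f θ) + (∫ θ in (α - π/2)..π, f θ) := by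
    rw [integral_add_adjacent_intervals] <;> exact hfc.intervalIntegrable _ _
  have hsplit2 : ∫ θ in (α - π/2)..π, f θ =
      (∫ θ in (α - π/2)..(π/2), f θ) + (∫ θ in (π/2)..π, f θ) := by
    rw [integral_add_adjacent_intervals] <;> exact hfc.intervalIntegrable _ _
  have hz1 : ∫ θ in (-π)..(α - π/2), f θ = 0 := by
    have : EqOn f (fun _ => (0:ℝ)) (uIcc (-π) (α - π/2)) := by
      intro θ hθ
      rw [uIcc_of_le h1] at hθ
      obtain ⟨hθ1, hθ2⟩ := hθ
      by_cases hhalf : θ ≤ -(π/2)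
      · have hcos : Real.cos θ ≤ 0 := by
          rw [← Real.cos_neg]
          exact Real.cos_nonpos_of_pi_div_two_le_of_le (by linarith) (by linarith)
        simp [hf, max_eq_right hcos]
      · push_neg at hhalf
        have hcos : Real.cos (θ - α) ≤ 0 := by
          rw [← Real.cos_neg, neg_sub]
          exact Real.cos_nonpos_of_pi_div_two_le_of_le (by linarith) (by linarith)
        simp [hf, max_eq_right hcos]
    rw [intervalIntegral.integral_congr this]
    simp
  have hz3 : ∫ θ in (π/2)..π, f θ = 0 := by
    have : EqOn f (fun _ => (0:ℝ)) (uIcc (π/2) π) := by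
      intro θ hθ
      rw [uIcc_of_le h3] at hθ
      have hcos : Real.cos θ ≤ 0 :=
        Real.cos_nonpos_of_pi_div_two_le_of_le hθ.1 (by linarith [hθ.2])
      simp [hf, max_eq_right hcos]
    rw [intervalIntegral.integral_congr this]
    simp
  have hmid : ∫ θ in (α - π/2)..(π/2), f θ = (Real.sin α + (π - α) * Real.cos α) / 2 := by
    have heq : EqOn f (fun θ => Real.cos θ * Real.cos (θ - α)) (uIcc (α - π/2) (π/2)) := by
      intro θ hθ
      rw [uIcc_of_le h2] at hθ
      obtain ⟨hθ1, hθ2⟩ := hθ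
      have hc1 : 0 ≤ Real.cos θ :=
        Real.cos_nonneg_of_mem_Icc ⟨by linarith, hθ2⟩
      have hc2 : 0 ≤ Real.cos (θ - α) :=
        Real.cos_nonneg_of_mem_Icc ⟨by linarith, by linarith⟩
      simp [hf, max_eq_left hc1, max_eq_left hc2]
    rw [intervalIntegral.integral_congr heq]
    rw [intervalIntegral.integral_eq_sub_of_hasDerivAt
      (fun θ _ => cos_prod_antideriv' α θ)
      ((Real.continuous_cos.mul
        (Real.continuous_cos.comp (continuous_id.sub continuous_const))).intervalIntegrable _ _)]
    have e1 : 2 * (π/2) - α = π - α := by ring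
    have e2 : 2 * (α - π/2) - α = α - π := by ring
    rw [e1, e2, Real.sin_pi_sub]
    have e3 : Real.sin (α - π) = -Real.sin α := by
      rw [show α - π = -(π - α) by ring, Real.sin_neg, Real.sin_pi_sub]
    rw [e3]
    ring
  rw [hsplit1, hsplit2, hz1, hz3, hmid]
  ring

private lemma gaussian_prod_eq_withDensity' :
    (gaussianReal 0 1).prod (gaussianReal 0 1) =
      (volume : Measure (ℝ × ℝ)).withDensity
        (fun z => gaussianPDF 0 1 z.1 * gaussianPDF 0 1 z.2) := by
  rw [Measure.volume_eq_prod]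
  refine (Measure.prod_eq fun s t hs ht => ?_).symm.symm
  rw [withDensity_apply _ (hs.prod ht), ← Measure.prod_restrict,
    lintegral_prod_mul ((measurable_gaussianPDF 0 1).aemeasurable)
      ((measurable_gaussianPDF 0 1).aemeasurable),
    gaussianReal_of_var_ne_zero 0 one_ne_zero, withDensity_apply _ hs, withDensity_apply _ ht]

private lemma integral_gaussian_prod' (g : ℝ × ℝ → ℝ) :
    ∫ w, g w ∂((gaussianReal 0 1).prod (gaussianReal 0 1)) =
      ∫ w : ℝ × ℝ, ((2*π)⁻¹ * Real.exp (-(w.1^2 + w.2^2)/2)) * g w := by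
  rw [gaussian_prod_eq_withDensity']
  have hd : (fun z : ℝ × ℝ => gaussianPDF 0 1 z.1 * gaussianPDF 0 1 z.2) =
      fun z => (((gaussianPDFReal 0 1 z.1).toNNReal * (gaussianPDFReal 0 1 z.2).toNNReal
        : ℝ≥0) : ℝ≥0∞) := by
    funext z
    rw [ENNReal.coe_mul]
    rfl
  have hmeas : Measurable fun z : ℝ × ℝ =>
      (gaussianPDFReal 0 1 z.1).toNNReal * (gaussianPDFReal 0 1 z.2).toNNReal :=
    (((measurable_gaussianPDFReal 0 1).comp measurable_fst).real_toNNReal).mul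
      (((measurable_gaussianPDFReal 0 1).comp measurable_snd).real_toNNReal)
  rw [hd, integral_withDensity_eq_integral_smul hmeas]
  congr 1
  funext w
  rw [NNReal.smul_def, NNReal.coe_mul, Real.coe_toNNReal _ (gaussianPDFReal_nonneg _ _ _),
    Real.coe_toNNReal _ (gaussianPDFReal_nonneg _ _ _)]
  congr 1
  have hp : ∀ x : ℝ, gaussianPDFReal 0 1 x = (Real.sqrt (2*π))⁻¹ * Real.exp (-x^2/2) := by
    intro x
    simp [gaussianPDFReal]
  have hA : (Real.sqrt (2*π))⁻¹ * (Real.sqrt (2*π))⁻¹ = (2*π)⁻¹ := by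
    rw [← mul_inv, Real.mul_self_sqrt (by positivity)]
  rw [hp w.1, hp w.2, mul_mul_mul_comm, hA, ← Real.exp_add]
  congr 1
  ring

end aux

/-- Dual activation of the ReLU `σ(t) = max(t,0)`:
`k_σ(a,b,c) = (ab/(2π))(√(1-c²) + (π - arccos c)c)`. -/
theorem dualActivation_relu (a b c : ℝ) (ha : 0 ≤ a) (hb : 0 ≤ b)
    (hc : c ∈ Set.Icc (-1 : ℝ) 1) :
    ∫ p, max p.1 0 * max p.2 0 ∂(gaussian2 a b c) =
      a * b / (2 * π) *
        (Real.sqrt (1 - c ^ 2) + (π - Real.arccos c) * c) := by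
  obtain ⟨hc1, hc2⟩ := hc
  have hπ0 := Real.pi_pos
  set st := Real.sqrt (1 - c ^ 2) with hst
  have hst0 : 0 ≤ st := Real.sqrt_nonneg _
  set α := Real.arccos c with hα
  have hcα : Real.cos α = c := Real.cos_arccos hc1 hc2
  have hsα : Real.sin α = st := Real.sin_arccos c
  have hα0 : 0 ≤ α := Real.arccos_nonneg c
  have hαπ : α ≤ π := Real.arccos_le_pi c
  have hT : Measurable fun w : ℝ × ℝ => (a * w.1, b * c * w.1 + b * st * w.2) :=
    ((measurable_fst.const_mul a).prodMk
      ((measurable_fst.const_mul (b * c)).add (measurable_snd.const_mul (b * st))))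
  have hF : AEStronglyMeasurable (fun p : ℝ × ℝ => max p.1 0 * max p.2 0)
      (Measure.map (fun w : ℝ × ℝ => (a * w.1, b * c * w.1 + b * st * w.2))
        ((gaussianReal 0 1).prod (gaussianReal 0 1))) :=
    ((continuous_fst.max continuous_const).mul
      (continuous_snd.max continuous_const)).aestronglyMeasurable
  rw [gaussian2, integral_map hT.aemeasurable hF]
  have hint : (fun w : ℝ × ℝ =>
        max (a * w.1, b * c * w.1 + b * st * w.2).1 0 *
          max (a * w.1, b * c * w.1 + b * st * w.2).2 0) =
      fun w : ℝ × ℝ => a * b * (max w.1 0 * max (c * w.1 + st * w.2) 0) := by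
    funext w
    have h1 : max (a * w.1) 0 = a * max w.1 0 := by
      rw [mul_max_of_nonneg _ _ ha, mul_zero]
    have h2 : max (b * c * w.1 + b * st * w.2) 0 = b * max (c * w.1 + st * w.2) 0 := by
      rw [mul_max_of_nonneg _ _ hb, mul_zero, show b * (c * w.1 + st * w.2)
        = b * c * w.1 + b * st * w.2 by ring]
    simp only
    rw [h1, h2]
    ring
  rw [hint, integral_const_mul, integral_gaussian_prod',
    ← integral_comp_polarCoord_symm]
  have hset : MeasurableSet polarCoord.target :=
    measurableSet_Ioi.prod measurableSet_Ioo
  have hcongr : Set.EqOn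
      (fun p : ℝ × ℝ => p.1 • (((2*π)⁻¹ *
          Real.exp (-(((polarCoord.symm p).1)^2 + ((polarCoord.symm p).2)^2)/2)) *
        (max (polarCoord.symm p).1 0 *
          max (c * (polarCoord.symm p).1 + st * (polarCoord.symm p).2) 0)))
      (fun p : ℝ × ℝ => (2*π)⁻¹ * ((p.1 ^ 3 * Real.exp (-p.1 ^ 2 / 2)) *
        (max (Real.cos p.2) 0 * max (Real.cos (p.2 - α)) 0)))
      polarCoord.target := by
    intro p hp
    have hr : 0 < p.1 := hp.1
    simp only [show polarCoord.symm p = (p.1 * Real.cos p.2, p.1 * Real.sin p.2) from rfl]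
    have hxy : (p.1 * Real.cos p.2) ^ 2 + (p.1 * Real.sin p.2) ^ 2 = p.1 ^ 2 := by
      have := Real.sin_sq_add_cos_sq p.2
      nlinarith [this]
    have hm1 : max (p.1 * Real.cos p.2) 0 = p.1 * max (Real.cos p.2) 0 := by
      rw [mul_max_of_nonneg _ _ hr.le, mul_zero]
    have hm2 : c * (p.1 * Real.cos p.2) + st * (p.1 * Real.sin p.2)
        = p.1 * Real.cos (p.2 - α) := by
      rw [Real.cos_sub, hcα, hsα]
      ring
    have hm3 : max (p.1 * Real.cos (p.2 - α)) 0 = p.1 * max (Real.cos (p.2 - α)) 0 := by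
      rw [mul_max_of_nonneg _ _ hr.le, mul_zero]
    rw [hxy, hm1, hm2, hm3, smul_eq_mul]
    ring
  rw [setIntegral_congr_fun hset hcongr, integral_const_mul,
    show polarCoord.target = Set.Ioi (0:ℝ) ×ˢ Set.Ioo (-π) π from rfl,
    Measure.volume_eq_prod,
    setIntegral_prod_mul (μ := (volume : Measure ℝ)) (ν := (volume : Measure ℝ))
      (fun r : ℝ => r ^ 3 * Real.exp (-r ^ 2 / 2))
      (fun θ : ℝ => max (Real.cos θ) 0 * max (Real.cos (θ - α)) 0)
      (Set.Ioi 0) (Set.Ioo (-π) π), radial_integral',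
    angular_integral' hα0 hαπ, hsα, hcα]
  field_simp
end
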